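/- arXiv:1910.07335 — 2 statements merged into one kernel-verified Lean document; each statement's English description precedes it below -/
import Mathlib

section
/- Let α and β be elements of a commutative ring with αβ = ℓ, and define t_n = α^n + β^n. Then for all n ≥ 0, t_{2n+1}² - 4ℓ^{2n+1} = (t₁² - 4ℓ) · ((1-2n)ℓ^n + Σ_{j=1}^{n} ℓ^{n-j} t_j²)². -/
/-- Let `α`, `β` be elements of a commutative ring with `α * β = ℓ`, and `t n = α ^ n + β ^ n`.
Then for all `n ≥ 0`,
`t (2n+1)² - 4 ℓ^(2n+1) = (t 1² - 4 ℓ) * ((1 - 2n) ℓ^n + ∑_{j=1}^{n} ℓ^(n-j) t j²)²`. -/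
theorem trace_odd_formula {R : Type*} [CommRing R] (α β ℓ : R) (t : ℕ → R)
    (hℓ : α * β = ℓ) (ht : ∀ n, t n = α ^ n + β ^ n) :
    ∀ n : ℕ, (t (2 * n + 1)) ^ 2 - 4 * ℓ ^ (2 * n + 1) =
      ((t 1) ^ 2 - 4 * ℓ) *
        ((1 - 2 * (n : R)) * ℓ ^ n + ∑ j ∈ Finset.Icc 1 n, ℓ ^ (n - j) * (t j) ^ 2) ^ 2 := by
  subst hℓ
  have key : ∀ n : ℕ,
      (α - β) * ((1 - 2 * (n : R)) * (α * β) ^ n +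
        ∑ j ∈ Finset.Icc 1 n, (α * β) ^ (n - j) * (t j) ^ 2) =
      α ^ (2 * n + 1) - β ^ (2 * n + 1) := by
    intro n
    induction n with
    | zero => simp
    | succ n ih =>
      rw [Finset.sum_Icc_succ_top (by omega : 1 ≤ n + 1)]
      have hsum : ∑ j ∈ Finset.Icc 1 n, (α * β) ^ (n + 1 - j) * (t j) ^ 2 =
          (α * β) * ∑ j ∈ Finset.Icc 1 n, (α * β) ^ (n - j) * (t j) ^ 2 := by
        rw [Finset.mul_sum]
        refine Finset.sum_congr rfl fun j hj => ?_
        have hj' : n + 1 - j = (n - j) + 1 := by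
          have := (Finset.mem_Icc.mp hj).2; omega
        rw [hj', pow_succ]; ring
      rw [hsum, ht (n + 1), Nat.sub_self, pow_zero, one_mul]
      have eα : α ^ (2 * (n + 1) + 1) = α ^ n * α ^ n * (α * α * α) := by
        rw [show 2 * (n + 1) + 1 = n + (n + 3) by ring, pow_add, pow_add]; ring
      have eβ : β ^ (2 * (n + 1) + 1) = β ^ n * β ^ n * (β * β * β) := by
        rw [show 2 * (n + 1) + 1 = n + (n + 3) by ring, pow_add, pow_add]; ring
      have eα' : α ^ (2 * n + 1) = α ^ n * α ^ n * α := by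
        rw [show 2 * n + 1 = n + (n + 1) by ring, pow_add, pow_add]; ring
      have eβ' : β ^ (2 * n + 1) = β ^ n * β ^ n * β := by
        rw [show 2 * n + 1 = n + (n + 1) by ring, pow_add, pow_add]; ring
      rw [eα', eβ', mul_pow] at ih
      rw [eα, eβ, mul_pow, pow_succ α, pow_succ β]
      push_cast
      linear_combination (α * β) * ih
  intro n
  have h := key n
  rw [ht (2 * n + 1), ht 1]
  have eα' : α ^ (2 * n + 1) = α ^ n * α ^ n * α := by
    rw [show 2 * n + 1 = n + (n + 1) by ring, pow_add, pow_add]; ring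
  have eβ' : β ^ (2 * n + 1) = β ^ n * β ^ n * β := by
    rw [show 2 * n + 1 = n + (n + 1) by ring, pow_add, pow_add]; ring
  have eℓ : (α * β) ^ (2 * n + 1) = (α ^ n * β ^ n) * (α ^ n * β ^ n) * (α * β) := by
    rw [mul_pow, eα', eβ']; ring
  rw [eα', eβ', mul_pow] at h
  rw [eα', eβ', eℓ, mul_pow]
  linear_combination -((α - β) * ((1 - 2 * (n : R)) * (α ^ n * β ^ n) +
    ∑ j ∈ Finset.Icc 1 n, (α * β) ^ (n - j) * (t j) ^ 2) +
    (α ^ n * α ^ n * α - β ^ n * β ^ n * β)) * h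
end

section
/- Let G = GL₂(𝔽_p) (p odd prime) and H ⊴ G a normal subgroup containing a subgroup isomorphic to {diag(*, 1)} (all matrices [[a,0],[0,1]], a ∈ 𝔽_p^×). Then H = G. -/
set_option maxHeartbeats 1000000
open Matrix

section Aux
variable {p : ℕ} [Fact p.Prime]

/-- upper transvection -/
def auxU (c : ZMod p) : GL (Fin 2) (ZMod p) :=
  ⟨!![1, c; 0, 1], !![1, -c; 0, 1],
    by simp [Matrix.mul_fin_two, Matrix.one_fin_two],
    by simp [Matrix.mul_fin_two, Matrix.one_fin_two]⟩

/-- lower transvection -/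
def auxL (c : ZMod p) : GL (Fin 2) (ZMod p) :=
  ⟨!![1, 0; c, 1], !![1, 0; -c, 1],
    by simp [Matrix.mul_fin_two, Matrix.one_fin_two],
    by simp [Matrix.mul_fin_two, Matrix.one_fin_two]⟩

/-- invertible diagonal -/
def auxD (a d : ZMod p) (ha : a ≠ 0) (hd : d ≠ 0) : GL (Fin 2) (ZMod p) :=
  ⟨!![a, 0; 0, d], !![a⁻¹, 0; 0, d⁻¹],
    by simp [Matrix.mul_fin_two, Matrix.one_fin_two, mul_inv_cancel₀ ha, mul_inv_cancel₀ hd],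
    by simp [Matrix.mul_fin_two, Matrix.one_fin_two, inv_mul_cancel₀ ha, inv_mul_cancel₀ hd]⟩

/-- swap matrix -/
def auxW : GL (Fin 2) (ZMod p) :=
  ⟨!![0, 1; 1, 0], !![0, 1; 1, 0],
    by simp [Matrix.mul_fin_two, Matrix.one_fin_two],
    by simp [Matrix.mul_fin_two, Matrix.one_fin_two]⟩

end Aux

/-- Let `G = GL₂(𝔽_p)` (`p` an odd prime) and `H ⊴ G` a normal subgroup containing the
subgroup of all matrices `diag(a, 1)`, `a ∈ 𝔽_p^×`.  Then `H = G`. -/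
theorem normal_subgroup_containing_diagonal_is_top (p : ℕ) [Fact p.Prime] (hp : p ≠ 2)
    (H : Subgroup (GL (Fin 2) (ZMod p))) (hH : H.Normal)
    (hdiag : ∀ g : GL (Fin 2) (ZMod p),
      (g : Matrix (Fin 2) (Fin 2) (ZMod p)) 0 1 = 0 →
      (g : Matrix (Fin 2) (Fin 2) (ZMod p)) 1 0 = 0 →
      (g : Matrix (Fin 2) (Fin 2) (ZMod p)) 1 1 = 1 → g ∈ H) :
    H = ⊤ := by
  have hprime : p.Prime := Fact.out
  have h2 : (2 : ZMod p) ≠ 0 := by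
    intro h
    have hdvd : p ∣ 2 := by
      have := (ZMod.natCast_eq_zero_iff 2 p).mp (by exact_mod_cast h)
      exact this
    exact hp ((Nat.prime_dvd_prime_iff_eq hprime Nat.prime_two).mp hdvd)
  -- diag(a,1) ∈ H for a ≠ 0
  have hD1 : ∀ (a : ZMod p) (ha : a ≠ 0), auxD a 1 ha one_ne_zero ∈ H := by
    intro a ha
    exact hdiag _ (by simp [auxD]) (by simp [auxD]) (by simp [auxD])
  have hm1 : (-1 : ZMod p) ≠ 0 := by simp
  -- all upper transvections
  have hU : ∀ c : ZMod p, auxU c ∈ H := by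
    intro c
    have hd : auxD (-1) 1 hm1 one_ne_zero ∈ H := hD1 _ _
    have key : auxU (c * 2⁻¹) * auxD (-1) 1 hm1 one_ne_zero * (auxU (c * 2⁻¹))⁻¹
        * (auxD (-1) 1 hm1 one_ne_zero)⁻¹ = auxU c := by
      apply Units.ext
      show (!![1, c*2⁻¹; 0, 1] * !![(-1:ZMod p), 0; 0, 1] * !![1, -(c*2⁻¹); 0, 1]
        * !![(-1:ZMod p)⁻¹, 0; 0, 1⁻¹] : Matrix (Fin 2) (Fin 2) (ZMod p)) = !![1, c; 0, 1]
      have hinv : ((-1:ZMod p))⁻¹ = -1 := by rw [inv_neg, inv_one]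
      rw [hinv]
      ext i j
      fin_cases i <;> fin_cases j <;>
        simp [Matrix.mul_fin_two] <;> field_simp <;> ring
    have : auxU (c * 2⁻¹) * auxD (-1) 1 hm1 one_ne_zero * (auxU (c * 2⁻¹))⁻¹ ∈ H :=
      hH.conj_mem _ hd _
    have := H.mul_mem this (H.inv_mem hd)
    rwa [key] at this
  -- conjugation by W
  have hWconj : ∀ g : GL (Fin 2) (ZMod p), g ∈ H → auxW * g * auxW⁻¹ ∈ H :=
    fun g hg => hH.conj_mem _ hg _
  -- lower transvections
  have hL : ∀ c : ZMod p, auxL c ∈ H := by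
    intro c
    have key : auxW * auxU c * auxW⁻¹ = auxL c := by
      apply Units.ext
      show (!![(0:ZMod p), 1; 1, 0] * !![1, c; 0, 1] * !![(0:ZMod p), 1; 1, 0]
        : Matrix (Fin 2) (Fin 2) (ZMod p)) = !![1, 0; c, 1]
      ext i j
      fin_cases i <;> fin_cases j <;> simp [Matrix.mul_fin_two]
    have := hWconj _ (hU c)
    rwa [key] at this
  -- diag(1,d) ∈ H
  have hD2 : ∀ (d : ZMod p) (hd : d ≠ 0), auxD 1 d one_ne_zero hd ∈ H := by
    intro d hd
    have key : auxW * auxD d 1 hd one_ne_zero * auxW⁻¹ = auxD 1 d one_ne_zero hd := by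
      apply Units.ext
      show (!![(0:ZMod p), 1; 1, 0] * !![d, 0; 0, 1] * !![(0:ZMod p), 1; 1, 0]
        : Matrix (Fin 2) (Fin 2) (ZMod p)) = !![1, 0; 0, d]
      ext i j
      fin_cases i <;> fin_cases j <;> simp [Matrix.mul_fin_two]
    have := hWconj _ (hD1 d hd)
    rwa [key] at this
  -- diag(a,d) ∈ H
  have hDD : ∀ (a d : ZMod p) (ha : a ≠ 0) (hd : d ≠ 0), auxD a d ha hd ∈ H := by
    intro a d ha hd
    have key : auxD a 1 ha one_ne_zero * auxD 1 d one_ne_zero hd = auxD a d ha hd := by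
      apply Units.ext
      show (!![a, 0; 0, 1] * !![(1:ZMod p), 0; 0, d] : Matrix (Fin 2) (Fin 2) (ZMod p))
        = !![a, 0; 0, d]
      ext i j
      fin_cases i <;> fin_cases j <;> simp [Matrix.mul_fin_two]
    rw [← key]
    exact H.mul_mem (hD1 a ha) (hD2 d hd)
  -- main
  ext g
  simp only [Subgroup.mem_top, iff_true]
  set a := (g : Matrix (Fin 2) (Fin 2) (ZMod p)) 0 0 with ha_def
  set b := (g : Matrix (Fin 2) (Fin 2) (ZMod p)) 0 1 with hb_def
  set c := (g : Matrix (Fin 2) (Fin 2) (ZMod p)) 1 0 with hc_def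
  set d := (g : Matrix (Fin 2) (Fin 2) (ZMod p)) 1 1 with hd_def
  have hdet : a * d - b * c ≠ 0 := by
    have hu : IsUnit ((g : Matrix (Fin 2) (Fin 2) (ZMod p)).det) :=
      (Matrix.isUnit_iff_isUnit_det _).mp g.isUnit
    rw [Matrix.det_fin_two] at hu
    exact hu.ne_zero
  have hgeta : (g : Matrix (Fin 2) (Fin 2) (ZMod p)) = !![a, b; c, d] :=
    Matrix.etaExpand_eq (g : Matrix (Fin 2) (Fin 2) (ZMod p)) ▸ rfl
  by_cases hc : c = 0
  · -- upper triangular: g = U(b/d) * D(a,d)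
    have ha : a ≠ 0 := by intro h; apply hdet; rw [h, hc]; ring
    have hd : d ≠ 0 := by intro h; apply hdet; rw [h, hc]; ring
    have key : g = auxU (b * d⁻¹) * auxD a d ha hd := by
      apply Units.ext
      show (g : Matrix (Fin 2) (Fin 2) (ZMod p))
        = !![1, b*d⁻¹; 0, 1] * !![a, 0; 0, d]
      rw [hgeta, hc]
      ext i j
      fin_cases i <;> fin_cases j <;> simp [Matrix.mul_fin_two] <;> field_simp
    rw [key]
    exact H.mul_mem (hU _) (hDD a d ha hd)
  · -- c ≠ 0: g = U((a-1)/c) * L(c) * U((d*δ⁻¹-1)/c) * D(1,δ)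
    set δ := a * d - b * c with hδ_def
    have key : g = auxU ((a - 1) * c⁻¹) * auxL c * auxU ((d * δ⁻¹ - 1) * c⁻¹)
        * auxD 1 δ one_ne_zero hdet := by
      apply Units.ext
      show (g : Matrix (Fin 2) (Fin 2) (ZMod p))
        = !![1, (a-1)*c⁻¹; 0, 1] * !![1, 0; c, 1] * !![1, (d*δ⁻¹-1)*c⁻¹; 0, 1]
          * !![(1:ZMod p), 0; 0, δ]
      rw [hgeta]
      ext i j
      fin_cases i <;> fin_cases j <;>
        simp [Matrix.mul_fin_two] <;> field_simp <;> ring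
    rw [key]
    exact H.mul_mem (H.mul_mem (H.mul_mem (hU _) (hL c)) (hU _)) (hDD 1 δ one_ne_zero hdet)
end
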